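/- In ℂ[S₃], the elements ξ_ν (for every ν ∈ ℂ) and η are idempotents: ξ_ν·ξ_ν = ξ_ν and η·η = η. Each of the right ideals ξ_ν·ℂ[S₃] and η·ℂ[S₃] is a minimal right ideal of ℂ-dimension 2, and every minimal right ideal of ℂ[S₃] of ℂ-dimension 2 is generated by exactly one element of the family {η} ∪ {ξ_ν : ν ∈ ℂ}. -/

import Mathlib

/-- The idempotent `ξ_ν = (1/3)(id + ν(2 3) + (1−ν)(1 2) − ν·c + (ν−1)·c² − (1 3))` of
`ℂ[S₃]`, where `c` is the 3-cycle `1↦2↦3↦1` (0-based: `finRotate 3`, and the transpositions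
`(2 3), (1 2), (1 3)` are `swap 1 2`, `swap 0 1`, `swap 0 2`). -/
noncomputable def xi (ν : ℂ) : MonoidAlgebra ℂ (Equiv.Perm (Fin 3)) :=
  (3⁻¹ : ℂ) • (MonoidAlgebra.single 1 1
    + ν • MonoidAlgebra.single (Equiv.swap (1 : Fin 3) 2) 1
    + (1 - ν) • MonoidAlgebra.single (Equiv.swap (0 : Fin 3) 1) 1
    - ν • MonoidAlgebra.single (finRotate 3) 1
    + (ν - 1) • MonoidAlgebra.single (finRotate 3 * finRotate 3) 1
    - MonoidAlgebra.single (Equiv.swap (0 : Fin 3) 2) 1)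

/-- The idempotent `η = (1/3)(id − (1 2) − c + (1 3))` of `ℂ[S₃]`. -/
noncomputable def eta : MonoidAlgebra ℂ (Equiv.Perm (Fin 3)) :=
  (3⁻¹ : ℂ) • (MonoidAlgebra.single 1 1
    - MonoidAlgebra.single (Equiv.swap (0 : Fin 3) 1) 1
    - MonoidAlgebra.single (finRotate 3) 1
    + MonoidAlgebra.single (Equiv.swap (0 : Fin 3) 2) 1)

/-- A (ℂ-subspace) right ideal of `ℂ[S₃]`: closed under right multiplication. -/
def IsRightIdeal (I : Submodule ℂ (MonoidAlgebra ℂ (Equiv.Perm (Fin 3)))) : Prop :=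
  ∀ a ∈ I, ∀ x : MonoidAlgebra ℂ (Equiv.Perm (Fin 3)), a * x ∈ I

/-- A minimal right ideal: nonzero and containing no nonzero proper right ideal. -/
def IsMinimalRightIdeal (I : Submodule ℂ (MonoidAlgebra ℂ (Equiv.Perm (Fin 3)))) : Prop :=
  IsRightIdeal I ∧ I ≠ ⊥ ∧
    ∀ J : Submodule ℂ (MonoidAlgebra ℂ (Equiv.Perm (Fin 3))),
      IsRightIdeal J → J ≤ I → J = ⊥ ∨ J = I

/-- The right ideal `e·ℂ[S₃] = {e·x : x ∈ ℂ[S₃]}` generated by `e`. -/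
noncomputable def rIdeal (e : MonoidAlgebra ℂ (Equiv.Perm (Fin 3))) :
    Submodule ℂ (MonoidAlgebra ℂ (Equiv.Perm (Fin 3))) :=
  LinearMap.range (LinearMap.mulLeft ℂ e)

namespace S12

open Matrix Module MonoidAlgebra

abbrev G3 := Equiv.Perm (Fin 3)
abbrev Aalg := MonoidAlgebra ℂ G3
abbrev M2 := Matrix (Fin 2) (Fin 2) ℂ
abbrev Balg := ℂ × ℂ × M2

def frep (g : G3) : Matrix (Fin 2) (Fin 2) ℤ :=
  if g 0 = 0 then (if g 1 = 1 then !![1,0;0,1] else !![1,0;1,-1])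
  else if g 0 = 1 then (if g 1 = 0 then !![-1,1;0,1] else !![0,-1;1,-1])
  else (if g 1 = 1 then !![0,-1;-1,0] else !![-1,1;-1,0])

def frepHom : G3 →* Matrix (Fin 2) (Fin 2) ℤ where
  toFun := frep
  map_one' := by decide
  map_mul' := by decide

noncomputable def rho : G3 →* Balg :=
  MonoidHom.prod 1 (MonoidHom.prod
    ((Int.castRingHom ℂ).toMonoidHom.comp ((Units.coeHom ℤ).comp Equiv.Perm.sign))
    (((Int.castRingHom ℂ).mapMatrix).toMonoidHom.comp frepHom))

lemma rho_apply (g : G3) :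
    rho g = (1, ((Equiv.Perm.sign g : ℤ) : ℂ), (frep g).map (Int.cast : ℤ → ℂ)) := rfl

lemma map_cast (a b c d : ℤ) :
    (!![a,b;c,d]).map (Int.cast : ℤ → ℂ) = !![(a:ℂ),(b:ℂ);(c:ℂ),(d:ℂ)] := by
  ext i j
  fin_cases i <;> fin_cases j <;> simp [Matrix.map_apply]

lemma rho_id : rho 1 = (1, 1, !![(1:ℂ),0;0,1]) := by
  rw [rho_apply]
  norm_num [show frep 1 = !![1,0;0,1] from by decide, map_cast]

lemma rho_s01 : rho (Equiv.swap (0:Fin 3) 1) = (1, -1, !![(-1:ℂ),1;0,1]) := by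
  rw [rho_apply]
  rw [show frep (Equiv.swap (0:Fin 3) 1) = !![-1,1;0,1] from by decide,
    show Equiv.Perm.sign (Equiv.swap (0:Fin 3) 1) = -1 from by decide, map_cast]
  norm_num

lemma rho_s12 : rho (Equiv.swap (1:Fin 3) 2) = (1, -1, !![(1:ℂ),0;1,-1]) := by
  rw [rho_apply]
  rw [show frep (Equiv.swap (1:Fin 3) 2) = !![1,0;1,-1] from by decide,
    show Equiv.Perm.sign (Equiv.swap (1:Fin 3) 2) = -1 from by decide, map_cast]
  norm_num

lemma rho_s02 : rho (Equiv.swap (0:Fin 3) 2) = (1, -1, !![(0:ℂ),-1;-1,0]) := by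
  rw [rho_apply]
  rw [show frep (Equiv.swap (0:Fin 3) 2) = !![0,-1;-1,0] from by decide,
    show Equiv.Perm.sign (Equiv.swap (0:Fin 3) 2) = -1 from by decide, map_cast]
  norm_num

lemma rho_c : rho (finRotate 3) = (1, 1, !![(0:ℂ),-1;1,-1]) := by
  rw [rho_apply]
  rw [show frep (finRotate 3) = !![0,-1;1,-1] from by decide,
    show Equiv.Perm.sign (finRotate 3) = 1 from by decide, map_cast]
  norm_num

lemma rho_c2 : rho (finRotate 3 * finRotate 3) = (1, 1, !![(-1:ℂ),1;-1,0]) := by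
  rw [rho_apply]
  rw [show frep (finRotate 3 * finRotate 3) = !![-1,1;-1,0] from by decide,
    show Equiv.Perm.sign (finRotate 3 * finRotate 3) = 1 from by decide, map_cast]
  norm_num


noncomputable def Phi : Aalg →ₐ[ℂ] Balg := MonoidAlgebra.lift ℂ Balg G3 rho

lemma Phi_single (g : G3) : Phi (MonoidAlgebra.single g (1:ℂ)) = rho g := by
  simp [Phi, MonoidAlgebra.lift_single]

/-- the column vector parametrizing `Φ (xi ν)` -/
def vP (ν : ℂ) : Fin 2 → ℂ := ![1 + ν, 2 - ν]
noncomputable def rP : Fin 2 → ℂ := ![(3:ℂ)⁻¹, (3:ℂ)⁻¹]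
def vQ : Fin 2 → ℂ := ![1, -1]
noncomputable def rQ : Fin 2 → ℂ := ![(2:ℂ)/3, -(1:ℂ)/3]

lemma Phi_xi (ν : ℂ) : Phi (xi ν) = (0, 0, vecMulVec (vP ν) rP) := by
  rw [xi]
  simp only [_root_.map_smul, map_add, map_sub, Phi_single, rho_id, rho_s01, rho_s12, rho_s02,
    rho_c, rho_c2]
  refine Prod.ext ?_ (Prod.ext ?_ ?_)
  · simp
  · simp
    ring
  · simp only [Prod.smul_snd, Prod.snd_add, Prod.snd_sub, Prod.smul_fst, Prod.fst_add,
      Prod.fst_sub]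
    ext i j
    fin_cases i <;> fin_cases j <;>
      simp [vecMulVec_apply, vP, rP, Matrix.smul_apply, Matrix.add_apply, Matrix.sub_apply] <;>
      ring

lemma Phi_eta : Phi eta = (0, 0, vecMulVec vQ rQ) := by
  rw [eta]
  simp only [_root_.map_smul, map_add, map_sub, Phi_single, rho_id, rho_s01, rho_c, rho_s02]
  refine Prod.ext ?_ (Prod.ext ?_ ?_)
  · simp
  · simp
  · simp only [Prod.smul_snd, Prod.snd_add, Prod.snd_sub, Prod.smul_fst, Prod.fst_add,
      Prod.fst_sub]
    ext i j
    fin_cases i <;> fin_cases j <;>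
      simp [vecMulVec_apply, vQ, rQ, Matrix.smul_apply, Matrix.add_apply, Matrix.sub_apply] <;>
      ring


noncomputable def t1 : Aalg := (6⁻¹ : ℂ) •
  (MonoidAlgebra.single 1 1 + MonoidAlgebra.single (Equiv.swap (0:Fin 3) 1) 1
   + MonoidAlgebra.single (Equiv.swap (1:Fin 3) 2) 1
   + MonoidAlgebra.single (Equiv.swap (0:Fin 3) 2) 1
   + MonoidAlgebra.single (finRotate 3) 1
   + MonoidAlgebra.single (finRotate 3 * finRotate 3) 1)

noncomputable def t2 : Aalg := (6⁻¹ : ℂ) •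
  (MonoidAlgebra.single 1 1 - MonoidAlgebra.single (Equiv.swap (0:Fin 3) 1) 1
   - MonoidAlgebra.single (Equiv.swap (1:Fin 3) 2) 1
   - MonoidAlgebra.single (Equiv.swap (0:Fin 3) 2) 1
   + MonoidAlgebra.single (finRotate 3) 1
   + MonoidAlgebra.single (finRotate 3 * finRotate 3) 1)

noncomputable def w00 : Aalg := (3⁻¹ : ℂ) •
  (MonoidAlgebra.single 1 1 - MonoidAlgebra.single (Equiv.swap (0:Fin 3) 1) 1
   + MonoidAlgebra.single (Equiv.swap (1:Fin 3) 2) 1 - MonoidAlgebra.single (finRotate 3) 1)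

noncomputable def w01 : Aalg := (3⁻¹ : ℂ) •
  (MonoidAlgebra.single (Equiv.swap (1:Fin 3) 2) 1
   - MonoidAlgebra.single (Equiv.swap (0:Fin 3) 2) 1
   - MonoidAlgebra.single (finRotate 3) 1
   + MonoidAlgebra.single (finRotate 3 * finRotate 3) 1)

noncomputable def w10 : Aalg := (3⁻¹ : ℂ) •
  (MonoidAlgebra.single (Equiv.swap (0:Fin 3) 1) 1
   - MonoidAlgebra.single (Equiv.swap (0:Fin 3) 2) 1
   + MonoidAlgebra.single (finRotate 3) 1
   - MonoidAlgebra.single (finRotate 3 * finRotate 3) 1)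

noncomputable def w11 : Aalg := (3⁻¹ : ℂ) •
  (MonoidAlgebra.single 1 1 + MonoidAlgebra.single (Equiv.swap (0:Fin 3) 1) 1
   - MonoidAlgebra.single (Equiv.swap (1:Fin 3) 2) 1
   - MonoidAlgebra.single (finRotate 3 * finRotate 3) 1)

lemma Phi_t1 : Phi t1 = ((1:ℂ), (0:ℂ), (0:M2)) := by
  rw [t1]
  simp only [_root_.map_smul, map_add, map_sub, Phi_single, rho_id, rho_s01, rho_s12, rho_s02,
    rho_c, rho_c2]
  refine Prod.ext ?_ (Prod.ext ?_ ?_) <;>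
    · simp only [Prod.smul_snd, Prod.snd_add, Prod.snd_sub, Prod.smul_fst, Prod.fst_add,
        Prod.fst_sub]
      try norm_num
      try (ext i j; fin_cases i <;> fin_cases j <;>
        simp [Matrix.smul_apply, Matrix.add_apply, Matrix.sub_apply] <;> try ring)

lemma Phi_t2 : Phi t2 = ((0:ℂ), (1:ℂ), (0:M2)) := by
  rw [t2]
  simp only [_root_.map_smul, map_add, map_sub, Phi_single, rho_id, rho_s01, rho_s12, rho_s02,
    rho_c, rho_c2]
  refine Prod.ext ?_ (Prod.ext ?_ ?_) <;>
    · simp only [Prod.smul_snd, Prod.snd_add, Prod.snd_sub, Prod.smul_fst, Prod.fst_add,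
        Prod.fst_sub]
      try norm_num
      try (ext i j; fin_cases i <;> fin_cases j <;>
        simp [Matrix.smul_apply, Matrix.add_apply, Matrix.sub_apply] <;> try ring)

lemma Phi_w00 : Phi w00 = ((0:ℂ), (0:ℂ), (!![1,0;0,0] : M2)) := by
  rw [w00]
  simp only [_root_.map_smul, map_add, map_sub, Phi_single, rho_id, rho_s01, rho_s12, rho_s02,
    rho_c, rho_c2]
  refine Prod.ext ?_ (Prod.ext ?_ ?_) <;>
    · simp only [Prod.smul_snd, Prod.snd_add, Prod.snd_sub, Prod.smul_fst, Prod.fst_add,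
        Prod.fst_sub]
      try norm_num
      try (ext i j; fin_cases i <;> fin_cases j <;>
        simp [Matrix.smul_apply, Matrix.add_apply, Matrix.sub_apply] <;> try ring)
      try ((repeat' constructor) <;> simp [funext_iff, Fin.forall_fin_succ])

lemma Phi_w01 : Phi w01 = ((0:ℂ), (0:ℂ), (!![0,1;0,0] : M2)) := by
  rw [w01]
  simp only [_root_.map_smul, map_add, map_sub, Phi_single, rho_id, rho_s01, rho_s12, rho_s02,
    rho_c, rho_c2]
  refine Prod.ext ?_ (Prod.ext ?_ ?_) <;>
    · simp only [Prod.smul_snd, Prod.snd_add, Prod.snd_sub, Prod.smul_fst, Prod.fst_add,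
        Prod.fst_sub]
      try norm_num
      try (ext i j; fin_cases i <;> fin_cases j <;>
        simp [Matrix.smul_apply, Matrix.add_apply, Matrix.sub_apply] <;> try ring)

lemma Phi_w10 : Phi w10 = ((0:ℂ), (0:ℂ), (!![0,0;1,0] : M2)) := by
  rw [w10]
  simp only [_root_.map_smul, map_add, map_sub, Phi_single, rho_id, rho_s01, rho_s12, rho_s02,
    rho_c, rho_c2]
  refine Prod.ext ?_ (Prod.ext ?_ ?_) <;>
    · simp only [Prod.smul_snd, Prod.snd_add, Prod.snd_sub, Prod.smul_fst, Prod.fst_add,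
        Prod.fst_sub]
      try norm_num
      try (ext i j; fin_cases i <;> fin_cases j <;>
        simp [Matrix.smul_apply, Matrix.add_apply, Matrix.sub_apply] <;> try ring)
      try ((repeat' constructor) <;> simp [funext_iff, Fin.forall_fin_succ])

lemma Phi_w11 : Phi w11 = ((0:ℂ), (0:ℂ), (!![0,0;0,1] : M2)) := by
  rw [w11]
  simp only [_root_.map_smul, map_add, map_sub, Phi_single, rho_id, rho_s01, rho_s12, rho_s02,
    rho_c, rho_c2]
  refine Prod.ext ?_ (Prod.ext ?_ ?_) <;>
    · simp only [Prod.smul_snd, Prod.snd_add, Prod.snd_sub, Prod.smul_fst, Prod.fst_add,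
        Prod.fst_sub]
      try norm_num
      try (ext i j; fin_cases i <;> fin_cases j <;>
        simp [Matrix.smul_apply, Matrix.add_apply, Matrix.sub_apply] <;> try ring)

lemma Phi_surj : Function.Surjective Phi := by
  intro b
  obtain ⟨x, y, m⟩ := b
  refine ⟨x • t1 + y • t2 + m 0 0 • w00 + m 0 1 • w01 + m 1 0 • w10 + m 1 1 • w11, ?_⟩
  simp only [map_add, _root_.map_smul, Phi_t1, Phi_t2, Phi_w00, Phi_w01, Phi_w10, Phi_w11]
  refine Prod.ext ?_ (Prod.ext ?_ ?_)
  · simp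
  · simp
  · simp only [Prod.smul_snd, Prod.snd_add, Prod.smul_fst, Prod.fst_add]
    ext i j
    fin_cases i <;> fin_cases j <;>
      simp [Matrix.smul_apply, Matrix.add_apply]

lemma finrank_Aalg : finrank ℂ Aalg = 6 := by
  have b : Basis G3 ℂ Aalg := MonoidAlgebra.basis G3 ℂ
  rw [finrank_eq_card_basis b]
  simp [Fintype.card_perm]
  rfl

instance : FiniteDimensional ℂ Aalg :=
  Module.Finite.of_basis (MonoidAlgebra.basis G3 ℂ : Basis G3 ℂ Aalg)

lemma finrank_Balg : finrank ℂ Balg = 6 := by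
  have : finrank ℂ Balg = finrank ℂ ℂ + (finrank ℂ ℂ + finrank ℂ M2) := by
    rw [finrank_prod, finrank_prod]
  rw [this, finrank_self, finrank_matrix]
  norm_num

lemma Phi_inj : Function.Injective Phi := by
  have h : finrank ℂ Aalg = finrank ℂ Balg := by rw [finrank_Aalg, finrank_Balg]
  exact (LinearMap.injective_iff_surjective_of_finrank_eq_finrank
    (f := Phi.toLinearMap) h).mpr Phi_surj

noncomputable def EE : Aalg ≃ₐ[ℂ] Balg := AlgEquiv.ofBijective Phi ⟨Phi_inj, Phi_surj⟩


/-- matrices whose columns all lie on the line spanned by `v` -/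
noncomputable def Cv (v : Fin 2 → ℂ) : Submodule ℂ M2 where
  carrier := {m | ∀ j, v 0 * m 1 j = v 1 * m 0 j}
  zero_mem' := by intro j; simp
  add_mem' := by
    intro a b ha hb j
    simp only [Matrix.add_apply]
    rw [mul_add, mul_add, ha j, hb j]
  smul_mem' := by
    intro c a ha j
    simp only [Matrix.smul_apply, smul_eq_mul]
    rw [mul_left_comm, ha j, mul_left_comm]

lemma mem_Cv {v : Fin 2 → ℂ} {m : M2} : m ∈ Cv v ↔ ∀ j, v 0 * m 1 j = v 1 * m 0 j :=
  Iff.rfl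

lemma vecMulVec_mem_Cv (v w : Fin 2 → ℂ) : vecMulVec v w ∈ Cv v := by
  intro j
  simp [vecMulVec_apply]
  ring

lemma exists_ne_zero_coord {v : Fin 2 → ℂ} (hv : v ≠ 0) : ∃ i, v i ≠ 0 := by
  by_contra h
  push_neg at h
  exact hv (funext fun i => h i)

lemma mem_Cv_iff {v : Fin 2 → ℂ} (hv : v ≠ 0) {m : M2} :
    m ∈ Cv v ↔ ∃ w, m = vecMulVec v w := by
  constructor
  · intro h
    obtain ⟨i₀, hi₀⟩ := exists_ne_zero_coord hv
    have key : ∀ i i' j, v i' * m i j = v i * m i' j := by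
      simp only [Fin.forall_fin_two]
      refine ⟨⟨?_, ?_⟩, ?_, ?_⟩ <;> first
        | exact ⟨(h 0).symm, (h 1).symm⟩
        | exact ⟨h 0, h 1⟩
        | trivial
    refine ⟨fun j => (v i₀)⁻¹ * m i₀ j, ?_⟩
    ext i j
    rw [vecMulVec_apply]
    calc m i j = (v i₀)⁻¹ * (v i₀ * m i j) := by field_simp
      _ = (v i₀)⁻¹ * (v i * m i₀ j) := by rw [key i i₀ j]
      _ = v i * ((v i₀)⁻¹ * m i₀ j) := by ring
  · rintro ⟨w, rfl⟩
    exact vecMulVec_mem_Cv v w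

lemma vecMulVec_add_right (v w w' : Fin 2 → ℂ) :
    vecMulVec v (w + w') = vecMulVec v w + vecMulVec v w' := by
  ext i j; simp [vecMulVec_apply]; ring

lemma vecMulVec_smul_right (v : Fin 2 → ℂ) (c : ℂ) (w : Fin 2 → ℂ) :
    vecMulVec v (c • w) = c • vecMulVec v w := by
  ext i j; simp [vecMulVec_apply]; ring

lemma vecMulVec_eq_zero_iff {v w : Fin 2 → ℂ} (hv : v ≠ 0) :
    vecMulVec v w = 0 ↔ w = 0 := by
  constructor
  · intro h
    obtain ⟨i₀, hi₀⟩ := exists_ne_zero_coord hv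
    funext j
    have := congrFun (congrFun h i₀) j
    rw [vecMulVec_apply] at this
    simpa [hi₀] using this
  · rintro rfl; ext i j; simp [vecMulVec_apply]

/-- the parametrization of `Cv v` by the second factor -/
noncomputable def cvEquiv {v : Fin 2 → ℂ} (hv : v ≠ 0) : (Fin 2 → ℂ) ≃ₗ[ℂ] Cv v := by
  refine LinearEquiv.ofBijective
    { toFun := fun w => ⟨vecMulVec v w, vecMulVec_mem_Cv v w⟩
      map_add' := fun w w' => Subtype.ext (vecMulVec_add_right v w w')
      map_smul' := fun c w => Subtype.ext (vecMulVec_smul_right v c w) } ⟨?_, ?_⟩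
  · intro w w' h
    have h' : vecMulVec v w - vecMulVec v w' = 0 := by
      rw [sub_eq_zero]; exact congrArg Subtype.val h
    have : vecMulVec v (w - w') = 0 := by
      ext i j; have := congrFun (congrFun h' i) j
      simpa [vecMulVec_apply, Matrix.sub_apply, mul_sub] using this
    have := (vecMulVec_eq_zero_iff hv).mp this
    exact sub_eq_zero.mp this
  · rintro ⟨m, hm⟩
    obtain ⟨w, rfl⟩ := (mem_Cv_iff hv).mp hm
    exact ⟨w, rfl⟩

lemma finrank_Cv {v : Fin 2 → ℂ} (hv : v ≠ 0) : finrank ℂ (Cv v) = 2 := by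
  rw [← (cvEquiv hv).finrank_eq]
  simp

lemma Cv_smul {c : ℂ} (hc : c ≠ 0) (v : Fin 2 → ℂ) : Cv (c • v) = Cv v := by
  ext m
  simp only [mem_Cv, Pi.smul_apply, smul_eq_mul]
  constructor
  · intro h j
    exact mul_left_cancel₀ hc (by linear_combination h j)
  · intro h j
    linear_combination c * h j

lemma cross_of_Cv_eq {v w : Fin 2 → ℂ} (h : Cv v = Cv w) : w 0 * v 1 = w 1 * v 0 := by
  have hm : vecMulVec v (Pi.single 0 1) ∈ Cv w := h ▸ vecMulVec_mem_Cv v (Pi.single 0 1)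
  have := hm 0
  simpa [vecMulVec_apply] using this

lemma Cv_mul_mem {v : Fin 2 → ℂ} {m : M2} (hm : m ∈ Cv v) (n : M2) : m * n ∈ Cv v := by
  intro j
  simp only [Matrix.mul_apply, Fin.sum_univ_two, Finset.mul_sum]
  have h0 := hm 0
  have h1 := hm 1
  linear_combination n 0 j * h0 + n 1 j * h1

lemma vecMulVec_mul (v r : Fin 2 → ℂ) (n : M2) :
    vecMulVec v r * n = vecMulVec v (Matrix.vecMul r n) := by
  ext i j
  simp [Matrix.mul_apply, vecMulVec_apply, Matrix.vecMul, dotProduct,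
    Fin.sum_univ_two]
  ring

lemma vecMul_surj {r : Fin 2 → ℂ} (hr : r ≠ 0) (u : Fin 2 → ℂ) :
    ∃ n : M2, Matrix.vecMul r n = u := by
  obtain ⟨k₀, hk₀⟩ := exists_ne_zero_coord hr
  refine ⟨Matrix.of fun k j => if k = k₀ then (r k₀)⁻¹ * u j else 0, ?_⟩
  funext j
  have : Matrix.vecMul r (Matrix.of fun k j => if k = k₀ then (r k₀)⁻¹ * u j else 0) j
      = r k₀ * ((r k₀)⁻¹ * u j) := by
    simp [Matrix.vecMul, dotProduct, mul_ite]
  rw [this]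
  field_simp

def IsRIB (I : Submodule ℂ Balg) : Prop := ∀ a ∈ I, ∀ x : Balg, a * x ∈ I

noncomputable def rIdealB (b : Balg) : Submodule ℂ Balg :=
  LinearMap.range (LinearMap.mulLeft ℂ b)

/-- the 2-dimensional minimal right ideal of `Balg` attached to a line in `ℂ²` -/
noncomputable def BI (v : Fin 2 → ℂ) : Submodule ℂ Balg :=
  (⊥ : Submodule ℂ ℂ).prod ((⊥ : Submodule ℂ ℂ).prod (Cv v))

lemma mem_BI {v : Fin 2 → ℂ} {x : Balg} :
    x ∈ BI v ↔ x.1 = 0 ∧ x.2.1 = 0 ∧ x.2.2 ∈ Cv v := by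
  simp [BI, Submodule.mem_prod, Submodule.mem_bot, and_assoc]

lemma BI_smul {c : ℂ} (hc : c ≠ 0) (v : Fin 2 → ℂ) : BI (c • v) = BI v := by
  rw [BI, Cv_smul hc, BI]

lemma BI_eq_iff_Cv_eq {v w : Fin 2 → ℂ} : BI v = BI w ↔ Cv v = Cv w := by
  constructor
  · intro h
    ext m
    have := Submodule.ext_iff.mp h ((0:ℂ), (0:ℂ), m)
    simpa [mem_BI] using this
  · intro h; rw [BI, h, BI]

lemma IsRIB_BI (v : Fin 2 → ℂ) : IsRIB (BI v) := by
  intro a ha x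
  rw [mem_BI] at ha ⊢
  obtain ⟨h1, h2, h3⟩ := ha
  exact ⟨by simp [Prod.fst_mul, h1], by simp [Prod.snd_mul, Prod.fst_mul, h2],
    Cv_mul_mem h3 x.2.2⟩

lemma finrank_BI {v : Fin 2 → ℂ} (hv : v ≠ 0) : finrank ℂ (BI v) = 2 := by
  have e : BI v ≃ₗ[ℂ] Cv v := by
    refine LinearEquiv.ofBijective
      { toFun := fun a => ⟨a.1.2.2, (mem_BI.mp a.2).2.2⟩
        map_add' := fun a b => rfl
        map_smul' := fun c a => rfl } ⟨?_, ?_⟩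
    · rintro ⟨a, ha⟩ ⟨b, hb⟩ h
      rw [mem_BI] at ha hb
      have h3 : a.2.2 = b.2.2 := congrArg Subtype.val h
      apply Subtype.ext
      exact Prod.ext (ha.1.trans hb.1.symm) (Prod.ext (ha.2.1.trans hb.2.1.symm) h3)
    · rintro ⟨m, hm⟩
      exact ⟨⟨((0:ℂ), (0:ℂ), m), mem_BI.mpr ⟨rfl, rfl, hm⟩⟩, rfl⟩
  rw [e.finrank_eq, finrank_Cv hv]

lemma BI_ne_bot {v : Fin 2 → ℂ} (hv : v ≠ 0) : BI v ≠ ⊥ := by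
  obtain ⟨i₀, hi₀⟩ := exists_ne_zero_coord hv
  rw [Submodule.ne_bot_iff]
  refine ⟨((0:ℂ), (0:ℂ), vecMulVec v (Pi.single 0 1)),
    mem_BI.mpr ⟨rfl, rfl, vecMulVec_mem_Cv v _⟩, ?_⟩
  intro h
  have : vecMulVec v (Pi.single (0 : Fin 2) (1:ℂ)) = 0 := by
    have := congrArg (fun x : Balg => x.2.2) h
    simpa using this
  rw [vecMulVec_eq_zero_iff hv] at this
  have := congrFun this 0
  simp at this

lemma BI_minimal {v : Fin 2 → ℂ} (hv : v ≠ 0) :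
    ∀ J : Submodule ℂ Balg, IsRIB J → J ≤ BI v → J = ⊥ ∨ J = BI v := by
  intro J hJ hle
  by_cases hbot : J = ⊥
  · exact Or.inl hbot
  right
  obtain ⟨a, haJ, hane⟩ := (Submodule.ne_bot_iff J).mp hbot
  obtain ⟨h1, h2, h3⟩ := mem_BI.mp (hle haJ)
  obtain ⟨w, hw⟩ := (mem_Cv_iff hv).mp h3
  have hwne : w ≠ 0 := by
    rintro rfl
    apply hane
    have : a.2.2 = 0 := by rw [hw]; ext i j; simp [vecMulVec_apply]
    exact Prod.ext h1 (Prod.ext h2 this)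
  refine le_antisymm hle ?_
  intro b hb
  obtain ⟨hb1, hb2, hb3⟩ := mem_BI.mp hb
  obtain ⟨u, hu⟩ := (mem_Cv_iff hv).mp hb3
  obtain ⟨n, hn⟩ := vecMul_surj hwne u
  have key : a * ((0:ℂ), (0:ℂ), n) = b := by
    refine Prod.ext ?_ (Prod.ext ?_ ?_)
    · simp [Prod.fst_mul, hb1]
    · simp [Prod.snd_mul, Prod.fst_mul, hb2]
    · show a.2.2 * n = b.2.2
      rw [hw, hu, vecMulVec_mul, hn]
  rw [← key]
  exact hJ a haJ _

lemma rIdealB_eq {v r : Fin 2 → ℂ} (hv : v ≠ 0) (hr : r ≠ 0) :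
    rIdealB ((0:ℂ), (0:ℂ), vecMulVec v r) = BI v := by
  apply le_antisymm
  · rintro b ⟨x, rfl⟩
    rw [LinearMap.mulLeft_apply]
    refine mem_BI.mpr ⟨by simp [Prod.fst_mul], by simp [Prod.snd_mul, Prod.fst_mul], ?_⟩
    show vecMulVec v r * x.2.2 ∈ Cv v
    rw [vecMulVec_mul]
    exact vecMulVec_mem_Cv v _
  · intro b hb
    obtain ⟨hb1, hb2, hb3⟩ := mem_BI.mp hb
    obtain ⟨u, hu⟩ := (mem_Cv_iff hv).mp hb3
    obtain ⟨n, hn⟩ := vecMul_surj hr u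
    refine ⟨((0:ℂ), (0:ℂ), n), ?_⟩
    rw [LinearMap.mulLeft_apply]
    refine Prod.ext ?_ (Prod.ext ?_ ?_)
    · simp [Prod.fst_mul, hb1]
    · simp [Prod.snd_mul, Prod.fst_mul, hb2]
    · show vecMulVec v r * n = b.2.2
      rw [vecMulVec_mul, hn, hu]


lemma mul_e1 (a : Balg) : a * ((1:ℂ), (0:ℂ), (0:M2)) = (a.1, 0, 0) := by
  refine Prod.ext ?_ (Prod.ext ?_ ?_) <;> simp [Prod.fst_mul, Prod.snd_mul]

lemma mul_e2 (a : Balg) : a * ((0:ℂ), (1:ℂ), (0:M2)) = (0, a.2.1, 0) := by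
  refine Prod.ext ?_ (Prod.ext ?_ ?_) <;> simp [Prod.fst_mul, Prod.snd_mul]

/-- every minimal right ideal of `Balg` of dimension 2 is some `BI v` -/
lemma classifyB (I : Submodule ℂ Balg) (hRI : IsRIB I) (hne : I ≠ ⊥)
    (hmin : ∀ J : Submodule ℂ Balg, IsRIB J → J ≤ I → J = ⊥ ∨ J = I)
    (hrank : finrank ℂ I = 2) : ∃ v : Fin 2 → ℂ, v ≠ 0 ∧ I = BI v := by
  classical
  -- step 1 : the two scalar components vanish on I
  have comp1 : ∀ a ∈ I, a.1 = 0 := by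
    intro a ha
    by_contra hne1
    -- the submodule of elements of the form (x,0,0) inside I
    set J : Submodule ℂ Balg := Submodule.map (LinearMap.mulRight ℂ ((1:ℂ), (0:ℂ), (0:M2))) I
      with hJdef
    have hJI : J ≤ I := by
      rintro b ⟨c, hc, rfl⟩
      rw [LinearMap.mulRight_apply]
      exact hRI c hc _
    have hJRI : IsRIB J := by
      rintro b ⟨c, hc, rfl⟩ x
      rw [LinearMap.mulRight_apply, mul_e1]
      refine ⟨c * x, hRI c hc x, ?_⟩
      rw [LinearMap.mulRight_apply, mul_e1]
      refine Prod.ext ?_ (Prod.ext ?_ ?_) <;> simp [Prod.fst_mul, Prod.snd_mul]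
    have hJne : J ≠ ⊥ := by
      rw [Submodule.ne_bot_iff]
      refine ⟨(a.1, 0, 0), ⟨a, ha, by rw [LinearMap.mulRight_apply, mul_e1]⟩, ?_⟩
      intro h
      exact hne1 (congrArg Prod.fst h)
    have hJI' : J = I := (hmin J hJRI hJI).resolve_left hJne
    -- then I injects into ℂ, contradicting rank 2
    have hinj : ∀ b ∈ I, b.2 = 0 := by
      intro b hb
      rw [← hJI'] at hb
      obtain ⟨c, _, rfl⟩ := hb
      rw [LinearMap.mulRight_apply, mul_e1]
      rfl
    have : Function.Injective ((LinearMap.fst ℂ ℂ (ℂ × M2)).comp I.subtype) := by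
      rintro ⟨b, hb⟩ ⟨c, hc⟩ h
      simp only [LinearMap.comp_apply, LinearMap.fst_apply, Submodule.subtype_apply] at h
      exact Subtype.ext (Prod.ext h ((hinj b hb).trans (hinj c hc).symm))
    have hle := LinearMap.finrank_le_finrank_of_injective this
    rw [hrank, finrank_self] at hle
    omega
  have comp2 : ∀ a ∈ I, a.2.1 = 0 := by
    intro a ha
    by_contra hne1
    set J : Submodule ℂ Balg := Submodule.map (LinearMap.mulRight ℂ ((0:ℂ), (1:ℂ), (0:M2))) I
      with hJdef
    have hJI : J ≤ I := by
      rintro b ⟨c, hc, rfl⟩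
      rw [LinearMap.mulRight_apply]
      exact hRI c hc _
    have hJRI : IsRIB J := by
      rintro b ⟨c, hc, rfl⟩ x
      rw [LinearMap.mulRight_apply, mul_e2]
      refine ⟨c * x, hRI c hc x, ?_⟩
      rw [LinearMap.mulRight_apply, mul_e2]
      refine Prod.ext ?_ (Prod.ext ?_ ?_) <;> simp [Prod.fst_mul, Prod.snd_mul]
    have hJne : J ≠ ⊥ := by
      rw [Submodule.ne_bot_iff]
      refine ⟨(0, a.2.1, 0), ⟨a, ha, by rw [LinearMap.mulRight_apply, mul_e2]⟩, ?_⟩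
      intro h
      exact hne1 (congrArg (fun x : Balg => x.2.1) h)
    have hJI' : J = I := (hmin J hJRI hJI).resolve_left hJne
    have hinj : ∀ b ∈ I, b.1 = 0 ∧ b.2.2 = 0 := by
      intro b hb
      rw [← hJI'] at hb
      obtain ⟨c, _, rfl⟩ := hb
      rw [LinearMap.mulRight_apply, mul_e2]
      exact ⟨rfl, rfl⟩
    have : Function.Injective
        ((LinearMap.fst ℂ ℂ M2).comp ((LinearMap.snd ℂ ℂ (ℂ × M2)).comp I.subtype)) := by
      rintro ⟨b, hb⟩ ⟨c, hc⟩ h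
      simp only [LinearMap.comp_apply, LinearMap.fst_apply, LinearMap.snd_apply,
        Submodule.subtype_apply] at h
      refine Subtype.ext (Prod.ext ((hinj b hb).1.trans (hinj c hc).1.symm)
        (Prod.ext h ((hinj b hb).2.trans (hinj c hc).2.symm)))
    have hle := LinearMap.finrank_le_finrank_of_injective this
    rw [hrank, finrank_self] at hle
    omega
  -- step 2 : I is determined by its matrix part M
  set π : Balg →ₗ[ℂ] M2 := (LinearMap.snd ℂ ℂ M2).comp (LinearMap.snd ℂ ℂ (ℂ × M2)) with hπ
  set M : Submodule ℂ M2 := Submodule.map π I with hM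
  have memM : ∀ m : M2, m ∈ M ↔ ((0:ℂ), (0:ℂ), m) ∈ I := by
    intro m
    constructor
    · rintro ⟨b, hb, rfl⟩
      have h1 := comp1 b hb
      have h2 := comp2 b hb
      have : ((0:ℂ), (0:ℂ), π b) = b := by
        refine Prod.ext h1.symm (Prod.ext h2.symm rfl)
      rwa [this]
    · intro h
      exact ⟨_, h, rfl⟩
  -- M is a right ideal of M2
  have hMRI : ∀ m ∈ M, ∀ n : M2, m * n ∈ M := by
    intro m hm n
    rw [memM] at hm ⊢
    have := hRI _ hm ((0:ℂ), (0:ℂ), n)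
    have heq : (((0:ℂ), (0:ℂ), m) * ((0:ℂ), (0:ℂ), n) : Balg) = ((0:ℂ), (0:ℂ), m * n) := by
      refine Prod.ext ?_ (Prod.ext ?_ ?_) <;> simp [Prod.fst_mul, Prod.snd_mul]
    rwa [heq] at this
  -- M has rank 2
  have hrankM : finrank ℂ M = 2 := by
    have e : I ≃ₗ[ℂ] M := by
      refine LinearEquiv.ofBijective
        { toFun := fun a => ⟨π a.1, Submodule.mem_map_of_mem a.2⟩
          map_add' := fun a b => Subtype.ext (by simp)
          map_smul' := fun c a => Subtype.ext (by simp) } ⟨?_, ?_⟩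
      · rintro ⟨b, hb⟩ ⟨c, hc⟩ h
        have h3 : π b = π c := congrArg Subtype.val h
        refine Subtype.ext (Prod.ext ((comp1 b hb).trans (comp1 c hc).symm)
          (Prod.ext ((comp2 b hb).trans (comp2 c hc).symm) h3))
      · rintro ⟨m, hm⟩
        obtain ⟨b, hb, rfl⟩ := hm
        exact ⟨⟨b, hb⟩, rfl⟩
    rw [← e.finrank_eq, hrank]
  -- minimality transfers to M
  have hminM : ∀ N : Submodule ℂ M2, (∀ m ∈ N, ∀ n : M2, m * n ∈ N) → N ≤ M →
      N = ⊥ ∨ N = M := by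
    intro N hNRI hNM
    set N' : Submodule ℂ Balg := (⊥ : Submodule ℂ ℂ).prod ((⊥ : Submodule ℂ ℂ).prod N)
      with hN'
    have memN' : ∀ x : Balg, x ∈ N' ↔ x.1 = 0 ∧ x.2.1 = 0 ∧ x.2.2 ∈ N := by
      intro x; simp [hN', Submodule.mem_prod, and_assoc]
    have hN'RI : IsRIB N' := by
      intro a ha x
      rw [memN'] at ha ⊢
      exact ⟨by simp [Prod.fst_mul, ha.1], by simp [Prod.snd_mul, Prod.fst_mul, ha.2.1],
        hNRI _ ha.2.2 x.2.2⟩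
    have hN'I : N' ≤ I := by
      intro x hx
      rw [memN'] at hx
      have : ((0:ℂ), (0:ℂ), x.2.2) ∈ I := (memM _).mp (hNM hx.2.2)
      have heq : ((0:ℂ), (0:ℂ), x.2.2) = x := Prod.ext hx.1.symm (Prod.ext hx.2.1.symm rfl)
      rwa [heq] at this
    rcases hmin N' hN'RI hN'I with h | h
    · left
      rw [Submodule.eq_bot_iff] at h ⊢
      intro m hm
      have := h ((0:ℂ), (0:ℂ), m) ((memN' _).mpr ⟨rfl, rfl, hm⟩)
      exact congrArg (fun x : Balg => x.2.2) this
    · right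
      apply le_antisymm hNM
      intro m hm
      rw [memM] at hm
      rw [← h, memN'] at hm
      exact hm.2.2
  -- now classify M inside M2
  obtain ⟨x, hxM, hxne⟩ : ∃ x ∈ M, x ≠ 0 := by
    by_contra h
    push_neg at h
    have : M = ⊥ := Submodule.eq_bot_iff M |>.mpr h
    rw [this, finrank_bot] at hrankM
    omega
  by_cases hdet : x.det = 0
  · -- rank one case
    rw [Matrix.det_fin_two] at hdet
    -- choose the nonzero column
    have hcol : ∃ k₀ : Fin 2, (fun i => x i k₀) ≠ 0 ∧
        (∀ j, x 0 k₀ * x 1 j = x 1 k₀ * x 0 j) := by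
      by_cases h0 : (fun i => x i 0) = 0
      · have e00 := congrFun h0 0
        have e01 := congrFun h0 1
        simp only [Pi.zero_apply] at e00 e01
        refine ⟨1, ?_, ?_⟩
        · intro h1
          apply hxne
          have e10 := congrFun h1 0
          have e11 := congrFun h1 1
          simp only [Pi.zero_apply] at e10 e11
          ext i j
          fin_cases i <;> fin_cases j <;> first
            | exact e00 | exact e01 | exact e10 | exact e11
        · rw [Fin.forall_fin_two]
          constructor
          · rw [e00, e01]; ring
          · ring
      · refine ⟨0, h0, ?_⟩
        rw [Fin.forall_fin_two]
        exact ⟨by ring, by linear_combination hdet⟩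
    obtain ⟨k₀, hvne, hvcross⟩ := hcol
    set v : Fin 2 → ℂ := fun i => x i k₀ with hv
    have hxCv : x ∈ Cv v := fun j => hvcross j
    -- the two generators of Cv v are in M
    have hgen : ∀ j : Fin 2, vecMulVec v (Pi.single j 1) ∈ M := by
      intro j
      have : x * Matrix.single k₀ j 1 = vecMulVec v (Pi.single j 1) := by
        ext i j'
        simp only [Matrix.mul_apply, Fin.sum_univ_two, vecMulVec_apply, hv,
          Matrix.single, Matrix.of_apply, Pi.single_apply, mul_ite, mul_one, mul_zero]
        by_cases hjj : j = j'
        · subst hjj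
          rcases Fin.exists_fin_two.mp ⟨k₀, rfl⟩ with h | h
          all_goals simp_all
        · simp [hjj, Ne.symm hjj]
      rw [← this]
      exact hMRI x hxM _
    have hCvM : Cv v ≤ M := by
      intro m hm
      obtain ⟨w, rfl⟩ := (mem_Cv_iff hvne).mp hm
      have hw : vecMulVec v w = w 0 • vecMulVec v (Pi.single 0 1)
          + w 1 • vecMulVec v (Pi.single 1 1) := by
        ext i j
        fin_cases j <;> simp [vecMulVec_apply] <;> ring
      rw [hw]
      exact Submodule.add_mem M (Submodule.smul_mem M _ (hgen 0))
        (Submodule.smul_mem M _ (hgen 1))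
    have hCveq : Cv v = M :=
      Submodule.eq_of_le_of_finrank_eq hCvM (by rw [finrank_Cv hvne, hrankM])
    refine ⟨v, hvne, ?_⟩
    have hMI : ∀ a : Balg, a ∈ I ↔ (a.1 = 0 ∧ a.2.1 = 0 ∧ a.2.2 ∈ M) := by
      intro a
      constructor
      · intro ha
        exact ⟨comp1 a ha, comp2 a ha, ⟨a, ha, rfl⟩⟩
      · rintro ⟨h1', h2', h3'⟩
        have h4 := (memM _).mp h3'
        rwa [show ((0:ℂ),(0:ℂ),a.2.2) = a from Prod.ext h1'.symm
          (Prod.ext h2'.symm rfl)] at h4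
    ext a
    rw [hMI, mem_BI, hCveq]
  · -- invertible case : contradiction
    exfalso
    have hunit : IsUnit x.det := isUnit_iff_ne_zero.mpr hdet
    have h1 : (1 : M2) ∈ M := by
      have := hMRI x hxM x⁻¹
      rwa [Matrix.mul_nonsing_inv x hunit] at this
    have htop : M = ⊤ := by
      rw [Submodule.eq_top_iff']
      intro n
      have := hMRI 1 h1 n
      rwa [one_mul] at this
    rw [htop, finrank_top] at hrankM
    have : finrank ℂ M2 = 4 := by
      rw [finrank_matrix]
      norm_num
    omega


lemma EE_apply (x : Aalg) : EE x = Phi x := rfl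

lemma vP_ne (ν : ℂ) : vP ν ≠ 0 := by
  intro h
  have h0 := congrFun h 0
  have h1 := congrFun h 1
  simp [vP] at h0 h1
  have : (3:ℂ) = 0 := by linear_combination h0 + h1
  norm_num at this

lemma rP_ne : rP ≠ 0 := by
  intro h
  have h0 := congrFun h 0
  simp [rP] at h0

lemma vQ_ne : vQ ≠ 0 := by
  intro h
  have h0 := congrFun h 0
  simp [vQ] at h0

lemma rQ_ne : rQ ≠ 0 := by
  intro h
  have h0 := congrFun h 0
  simp [rQ] at h0

lemma mulB3 (m n : M2) : (((0:ℂ), (0:ℂ), m) * ((0:ℂ), (0:ℂ), n) : Balg) = (0, 0, m * n) := by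
  refine Prod.ext ?_ (Prod.ext ?_ ?_) <;> simp [Prod.fst_mul, Prod.snd_mul]

lemma idem_aux {v r : Fin 2 → ℂ} (h : r 0 * v 0 + r 1 * v 1 = 1) :
    vecMulVec v r * vecMulVec v r = vecMulVec v r := by
  have key : Matrix.vecMul r (vecMulVec v r) = r := by
    funext j
    simp only [Matrix.vecMul, dotProduct, Fin.sum_univ_two, vecMulVec_apply,
      Matrix.of_apply]
    linear_combination r j * h
  rw [vecMulVec_mul, key]

lemma xi_idem (ν : ℂ) : xi ν * xi ν = xi ν := by
  apply Phi_inj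
  rw [_root_.map_mul, Phi_xi, mulB3, idem_aux]
  · simp [rP, vP]
    field_simp
    ring
  
lemma eta_idem : eta * eta = eta := by
  apply Phi_inj
  rw [_root_.map_mul, Phi_eta, mulB3, idem_aux]
  · simp [rQ, vQ]
    norm_num

-- transfer lemmas
lemma sigma_rIdeal (e : Aalg) :
    Submodule.map EE.toLinearMap (rIdeal e) = rIdealB (EE e) := by
  ext b
  simp only [rIdeal, rIdealB, Submodule.mem_map, LinearMap.mem_range,
    LinearMap.mulLeft_apply]
  constructor
  · rintro ⟨a, ⟨x, rfl⟩, rfl⟩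
    exact ⟨EE x, by simp [AlgEquiv.toLinearMap_apply, _root_.map_mul]⟩
  · rintro ⟨z, rfl⟩
    refine ⟨e * EE.symm z, ⟨EE.symm z, rfl⟩, ?_⟩
    simp [AlgEquiv.toLinearMap_apply, _root_.map_mul]

lemma RI_transfer (I : Submodule ℂ Aalg) :
    IsRightIdeal I ↔ IsRIB (Submodule.map EE.toLinearMap I) := by
  constructor
  · rintro h b ⟨a, ha, rfl⟩ x
    refine ⟨a * EE.symm x, h a ha _, ?_⟩
    simp [AlgEquiv.toLinearMap_apply, _root_.map_mul]
  · intro h a ha x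
    obtain ⟨c, hc, hcx⟩ := h (EE a) ⟨a, ha, rfl⟩ (EE x)
    have : c = a * x := by
      apply EE.injective
      rw [show (EE.toLinearMap c : Balg) = EE c from rfl] at hcx
      rw [hcx, _root_.map_mul]
    rwa [← this]

lemma bot_transfer (I : Submodule ℂ Aalg) :
    Submodule.map EE.toLinearMap I = ⊥ ↔ I = ⊥ := by
  constructor
  · intro h
    rw [Submodule.eq_bot_iff] at h ⊢
    intro a ha
    have := h (EE a) ⟨a, ha, rfl⟩
    exact EE.injective (by rw [this, map_zero])
  · rintro rfl
    exact Submodule.map_bot _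

lemma map_inj {I J : Submodule ℂ Aalg} :
    Submodule.map EE.toLinearMap I = Submodule.map EE.toLinearMap J → I = J := by
  intro h
  apply Submodule.map_injective_of_injective (f := EE.toLinearMap) EE.injective h

lemma map_symm_map (K : Submodule ℂ Balg) :
    Submodule.map EE.toLinearMap (Submodule.map EE.symm.toLinearMap K) = K := by
  ext b
  constructor
  · rintro ⟨a, ⟨k, hk, rfl⟩, rfl⟩
    simpa [AlgEquiv.toLinearMap_apply] using hk
  · intro hb
    exact ⟨EE.symm b, ⟨b, hb, rfl⟩, by simp [AlgEquiv.toLinearMap_apply]⟩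

lemma finrank_sigma (I : Submodule ℂ Aalg) :
    finrank ℂ (Submodule.map EE.toLinearMap I) = finrank ℂ I := by
  have h := LinearEquiv.finrank_map_eq EE.toLinearEquiv I
  rwa [show (EE.toLinearEquiv : Aalg →ₗ[ℂ] Balg) = EE.toLinearMap from rfl] at h

lemma minimal_transfer (I : Submodule ℂ Aalg) :
    IsMinimalRightIdeal I ↔
      (IsRIB (Submodule.map EE.toLinearMap I) ∧ Submodule.map EE.toLinearMap I ≠ ⊥ ∧
       ∀ J : Submodule ℂ Balg, IsRIB J → J ≤ Submodule.map EE.toLinearMap I →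
         J = ⊥ ∨ J = Submodule.map EE.toLinearMap I) := by
  constructor
  · rintro ⟨h1, h2, h3⟩
    refine ⟨(RI_transfer I).mp h1, fun h => h2 ((bot_transfer I).mp h), ?_⟩
    intro J' hJ' hle
    set J := Submodule.map EE.symm.toLinearMap J' with hJ
    have hmap : Submodule.map EE.toLinearMap J = J' := map_symm_map J'
    have hJRI : IsRightIdeal J := (RI_transfer J).mpr (by rwa [hmap])
    have hJle : J ≤ I := by
      intro a haJ
      have : EE a ∈ J' := by
        rw [← hmap]
        exact ⟨a, haJ, rfl⟩
      obtain ⟨c, hc, hce⟩ := hle this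
      have : c = a := EE.injective (by rw [show (EE.toLinearMap c : Balg) = EE c from rfl] at hce; rw [hce])
      rwa [← this]
    rcases h3 J hJRI hJle with h | h
    · left; rw [← hmap, h, Submodule.map_bot]
    · right; rw [← hmap, h]
  · rintro ⟨h1, h2, h3⟩
    refine ⟨(RI_transfer I).mpr h1, fun h => h2 (by rw [h, Submodule.map_bot]), ?_⟩
    intro J hJ hle
    rcases h3 (Submodule.map EE.toLinearMap J) ((RI_transfer J).mp hJ)
        (Submodule.map_mono hle) with h | h
    · left; exact (bot_transfer J).mp h
    · right; exact map_inj h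

lemma sigma_xi (ν : ℂ) :
    Submodule.map EE.toLinearMap (rIdeal (xi ν)) = BI (vP ν) := by
  rw [sigma_rIdeal, EE_apply, Phi_xi]
  exact rIdealB_eq (vP_ne ν) rP_ne

lemma sigma_eta :
    Submodule.map EE.toLinearMap (rIdeal eta) = BI vQ := by
  rw [sigma_rIdeal, EE_apply, Phi_eta]
  exact rIdealB_eq vQ_ne rQ_ne

lemma minimal_of_sigma_BI {e : Aalg} {v : Fin 2 → ℂ} (hv : v ≠ 0)
    (h : Submodule.map EE.toLinearMap (rIdeal e) = BI v) :
    IsMinimalRightIdeal (rIdeal e) ∧ finrank ℂ (rIdeal e) = 2 := by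
  constructor
  · rw [minimal_transfer, h]
    exact ⟨IsRIB_BI v, BI_ne_bot hv, BI_minimal hv⟩
  · rw [← finrank_sigma, h, finrank_BI hv]

lemma cross_of_BI_eq {v w : Fin 2 → ℂ} (h : BI v = BI w) : w 0 * v 1 = w 1 * v 0 :=
  cross_of_Cv_eq (BI_eq_iff_Cv_eq.mp h)

theorem stmt12_aux :
    (∀ ν : ℂ, xi ν * xi ν = xi ν) ∧ eta * eta = eta ∧
    (∀ ν : ℂ, IsMinimalRightIdeal (rIdeal (xi ν)) ∧
      Module.finrank ℂ (rIdeal (xi ν)) = 2) ∧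
    (IsMinimalRightIdeal (rIdeal eta) ∧ Module.finrank ℂ (rIdeal eta) = 2) ∧
    ∀ I : Submodule ℂ (MonoidAlgebra ℂ (Equiv.Perm (Fin 3))),
      IsMinimalRightIdeal I → Module.finrank ℂ I = 2 →
        ∃! e : MonoidAlgebra ℂ (Equiv.Perm (Fin 3)),
          e ∈ insert eta (Set.range xi) ∧ I = rIdeal e := by
  refine ⟨xi_idem, eta_idem, fun ν => minimal_of_sigma_BI (vP_ne ν) (sigma_xi ν),
    minimal_of_sigma_BI vQ_ne sigma_eta, ?_⟩
  intro I hmin hrank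
  obtain ⟨v, hv, hIv⟩ := classifyB (Submodule.map EE.toLinearMap I)
    ((minimal_transfer I).mp hmin).1 ((minimal_transfer I).mp hmin).2.1
    ((minimal_transfer I).mp hmin).2.2
    (by rw [finrank_sigma]; exact hrank)
  by_cases hs : v 0 + v 1 = 0
  · -- the eta case
    have hv0 : v 0 ≠ 0 := by
      intro h0
      apply hv
      have h1 : v 1 = 0 := by linear_combination hs - h0
      funext i
      fin_cases i
      · exact h0
      · exact h1
    have hveq : v = v 0 • vQ := by
      funext i
      fin_cases i
      · simp [vQ]
      · simp [vQ]
        linear_combination hs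
    have hBIv : BI v = BI vQ := by rw [hveq, BI_smul hv0]
    refine ⟨eta, ⟨Set.mem_insert _ _, ?_⟩, ?_⟩
    · apply map_inj
      rw [hIv, sigma_eta, hBIv]
    · rintro e' ⟨he', hIe'⟩
      rcases Set.mem_insert_iff.mp he' with rfl | ⟨ν', rfl⟩
      · rfl
      · exfalso
        have heq : BI v = BI (vP ν') := by
          rw [← hIv, hIe', sigma_xi]
        have hc := cross_of_BI_eq heq
        simp [vP] at hc
        have h1 : v 1 = -v 0 := by linear_combination hs
        have h3 : (3:ℂ) * v 0 = 0 := by linear_combination -hc + (1+ν') * h1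
        exact hv0 (by
          have h30 : (3:ℂ) ≠ 0 := by norm_num
          exact mul_left_cancel₀ h30 (by rw [h3, mul_zero]))
  · -- the xi case
    set ν : ℂ := (2 * v 0 - v 1) / (v 0 + v 1) with hν
    have hveq : vP ν = (3 / (v 0 + v 1)) • v := by
      funext i
      fin_cases i
      · simp [vP, hν]
        field_simp
        ring
      · simp [vP, hν]
        field_simp
        ring
    have h3s : (3 : ℂ) / (v 0 + v 1) ≠ 0 := div_ne_zero (by norm_num) hs
    have hBIv : BI (vP ν) = BI v := by rw [hveq, BI_smul h3s]
    refine ⟨xi ν, ⟨Set.mem_insert_iff.mpr (Or.inr ⟨ν, rfl⟩), ?_⟩, ?_⟩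
    · apply map_inj
      rw [hIv, sigma_xi, hBIv]
    · rintro e' ⟨he', hIe'⟩
      rcases Set.mem_insert_iff.mp he' with rfl | ⟨ν', rfl⟩
      · exfalso
        have heq : BI v = BI vQ := by rw [← hIv, hIe', sigma_eta]
        have hc := cross_of_BI_eq heq
        simp [vQ] at hc
        exact hs (by linear_combination hc)
      · have heq : BI v = BI (vP ν') := by rw [← hIv, hIe', sigma_xi]
        have hc := cross_of_BI_eq heq
        simp [vP] at hc
        have hnu : ν' = ν := by
          rw [hν, eq_div_iff hs]
          linear_combination hc
        rw [hnu]


end S12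

/-- The `ξ_ν` and `η` are idempotent, each generates a minimal right ideal of dimension 2,
and every minimal right ideal of `ℂ[S₃]` of dimension 2 is generated by exactly one member
of the family `{η} ∪ {ξ_ν : ν ∈ ℂ}`. -/
theorem stmt12 :
    (∀ ν : ℂ, xi ν * xi ν = xi ν) ∧ eta * eta = eta ∧
    (∀ ν : ℂ, IsMinimalRightIdeal (rIdeal (xi ν)) ∧
      Module.finrank ℂ (rIdeal (xi ν)) = 2) ∧
    (IsMinimalRightIdeal (rIdeal eta) ∧ Module.finrank ℂ (rIdeal eta) = 2) ∧
    ∀ I : Submodule ℂ (MonoidAlgebra ℂ (Equiv.Perm (Fin 3))),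
      IsMinimalRightIdeal I → Module.finrank ℂ I = 2 →
        ∃! e : MonoidAlgebra ℂ (Equiv.Perm (Fin 3)),
          e ∈ insert eta (Set.range xi) ∧ I = rIdeal e := S12.stmt12_aux
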